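/- arXiv:2505.17360 — 2 statements merged into one kernel-verified Lean document; each statement's English description precedes it below -/
import Mathlib

section
/- Let μ be a probability distribution on ℝ with finite moments, and let {ψ_k}_{k≥0} be the orthonormal polynomials for μ with ψ₀ = 1. For α, β ∈ ℕ^m with coordinates sorted in decreasing order, E_{λ∼μ^m} E_{π,π'∼S_m} [ ∏_i ψ_{α_i}(λ_{π(i)}) ψ_{β_i}(λ_{π'(i)}) ] equals 0 if α ≠ β, and is strictly positive if α = β (and α ≠ 0). -/
open MeasureTheory

lemma stmt9_pi_int (m : ℕ) (μ : Measure ℝ) [SigmaFinite μ] (F : Fin m → ℝ → ℝ) :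
    ∫ lam : Fin m → ℝ, ∏ i, F i (lam i) ∂(Measure.pi fun _ => μ) = ∏ i, ∫ x, F i x ∂μ :=
  MeasureTheory.integral_fintype_prod_eq_prod (f := F) (μ := fun _ => μ)

lemma stmt9_sorted_perm_eq (m : ℕ) (α β : Fin m → ℕ) (hα : Antitone α) (hβ : Antitone β)
    (σ : Equiv.Perm (Fin m)) (h : ∀ i, α i = β (σ i)) : α = β := by
  have hp : (List.ofFn α).Perm (List.ofFn β) := by
    have : α = β ∘ σ := funext h
    rw [this]; exact σ.ofFn_comp_perm β
  exact List.ofFn_injective (List.Perm.eq_of_sortedGE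
    (List.sortedGE_ofFn_iff.2 hα)
    (List.sortedGE_ofFn_iff.2 hβ) hp)

/-- Orthogonality of symmetrized products of orthonormal polynomials: for sorted index
vectors α, β, the symmetrized cross-moment vanishes if α ≠ β and is strictly positive if
α = β ≠ 0. -/
theorem stmt9 (m : ℕ) (μ : MeasureTheory.Measure ℝ) [MeasureTheory.IsProbabilityMeasure μ]
    (hmom : ∀ k : ℕ, MeasureTheory.Integrable (fun x => x ^ k) μ)
    (ψ : ℕ → Polynomial ℝ) (hψ0 : ψ 0 = 1)
    (hdeg : ∀ k, (ψ k).natDegree = k)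
    (horth : ∀ k l, ∫ x, (ψ k).eval x * (ψ l).eval x ∂μ = if k = l then 1 else 0)
    (α β : Fin m → ℕ) (hα : Antitone α) (hβ : Antitone β)
    (E : ℝ)
    (hE : E = ((m.factorial : ℝ) ^ 2)⁻¹ *
      ∑ π : Equiv.Perm (Fin m), ∑ π' : Equiv.Perm (Fin m),
        ∫ lam : Fin m → ℝ,
          (∏ i, (ψ (α i)).eval (lam (π i)) * (ψ (β i)).eval (lam (π' i)))
          ∂(MeasureTheory.Measure.pi fun _ => μ)) :
    (α ≠ β → E = 0) ∧ (α = β → α ≠ 0 → 0 < E) := by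
  classical
  have key : ∀ π π' : Equiv.Perm (Fin m),
      (∫ lam : Fin m → ℝ,
          (∏ i, (ψ (α i)).eval (lam (π i)) * (ψ (β i)).eval (lam (π' i)))
          ∂(MeasureTheory.Measure.pi fun _ => μ)) =
      if (∀ j, α (π⁻¹ j) = β (π'⁻¹ j)) then (1 : ℝ) else 0 := by
    intro π π'
    have hrw : ∀ lam : Fin m → ℝ,
        (∏ i, (ψ (α i)).eval (lam (π i)) * (ψ (β i)).eval (lam (π' i))) =
        ∏ j, ((ψ (α (π⁻¹ j))).eval (lam j) * (ψ (β (π'⁻¹ j))).eval (lam j)) := by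
      intro lam
      rw [Finset.prod_mul_distrib, Finset.prod_mul_distrib]
      congr 1
      · rw [← Equiv.prod_comp π (fun j => (ψ (α (π⁻¹ j))).eval (lam j))]
        simp
      · rw [← Equiv.prod_comp π' (fun j => (ψ (β (π'⁻¹ j))).eval (lam j))]
        simp
    simp_rw [hrw]
    rw [stmt9_pi_int m μ (fun j x => (ψ (α (π⁻¹ j))).eval x * (ψ (β (π'⁻¹ j))).eval x)]
    rw [Finset.prod_congr rfl fun j _ => horth _ _]
    rw [Fintype.prod_boole (M₀ := ℝ) (p := fun j => α (π⁻¹ j) = β (π'⁻¹ j))]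
    congr 1
  rw [hE]
  constructor
  · intro hne
    have hzero : ∀ π π' : Equiv.Perm (Fin m),
        (if (∀ j, α (π⁻¹ j) = β (π'⁻¹ j)) then (1 : ℝ) else 0) = 0 := by
      intro π π'
      rw [if_neg]
      intro h
      apply hne
      refine stmt9_sorted_perm_eq m α β hα hβ (π.trans π'.symm) fun i => ?_
      simpa using h (π i)
    simp only [key, hzero, Finset.sum_const_zero, mul_zero]
  · intro heq _
    subst heq
    simp only [key]
    apply mul_pos
    · rw [inv_pos]
      positivity
    · apply Finset.sum_pos'
      · intro π _
        apply Finset.sum_nonneg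
        intro π' _
        split <;> norm_num
      · refine ⟨1, Finset.mem_univ _, ?_⟩
        apply Finset.sum_pos'
        · intro π' _
          split <;> norm_num
        · exact ⟨1, Finset.mem_univ _, by simp⟩
end

section
/- Let μ be a probability measure on ℝ with finite moments and ν_P = μ^{m-1} × δ_{λ*}. For any symmetric polynomial f of degree d in m variables with E_{μ^m}[f] = 0, there is a univariate polynomial g of degree at most d with E_μ[g] = 0 such that E_{λ∼μ^m}[(Σ_{i=1}^m g(λ_i))²] ≤ E_{λ∼μ^m}[f(λ)²] and E_{λ∼ν_P}[Σ_{i=1}^m g(λ_i)] = E_{λ∼ν_P}[f(λ)]. -/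
open MeasureTheory MvPolynomial Finset

namespace Stmt10Aux

variable {m : ℕ} {μ : MeasureTheory.Measure ℝ}

noncomputable def Mo (μ : Measure ℝ) (k : ℕ) : ℝ := ∫ x, x ^ k ∂μ

lemma intg_prod [IsProbabilityMeasure μ] (F : Fin m → ℝ → ℝ) (hF : ∀ i, Integrable (F i) μ) :
    Integrable (fun lam : Fin m → ℝ => ∏ i, F i (lam i)) (Measure.pi fun _ => μ) := by
  letI : MeasureSpace ℝ := ⟨μ⟩
  exact Integrable.fintype_prod hF

lemma prod_integral [IsProbabilityMeasure μ] (F : Fin m → ℝ → ℝ) :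
    ∫ lam : Fin m → ℝ, ∏ i, F i (lam i) ∂(Measure.pi fun _ => μ) = ∏ i, ∫ x, F i x ∂μ := by
  letI : MeasureSpace ℝ := ⟨μ⟩
  exact integral_fintype_prod_eq_prod F

lemma prod_ite_univ {M : Type*} [CommMonoid M] (s : Finset (Fin m)) (g : Fin m → M) :
    ∏ i ∈ s, g i = ∏ i, (if i ∈ s then g i else 1) := by
  rw [← Finset.prod_filter]
  congr 1
  simp [Finset.filter_mem_eq_inter]

lemma intg_prod_s [IsProbabilityMeasure μ] (s : Finset (Fin m)) (F : Fin m → ℝ → ℝ)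
    (hF : ∀ i, Integrable (F i) μ) :
    Integrable (fun lam : Fin m → ℝ => ∏ i ∈ s, F i (lam i)) (Measure.pi fun _ => μ) := by
  have h : (fun lam : Fin m → ℝ => ∏ i ∈ s, F i (lam i))
      = fun lam => ∏ i, (fun j x => if j ∈ s then F j x else 1) i (lam i) := by
    funext lam; exact prod_ite_univ s _
  have hF' : ∀ i, Integrable (fun x => if i ∈ s then F i x else 1) μ := by
    intro i
    by_cases hi : i ∈ s <;> simp [hi, hF i]
  rw [h]
  exact intg_prod (fun j x => if j ∈ s then F j x else 1) hF'

lemma prod_integral_s [IsProbabilityMeasure μ] (s : Finset (Fin m)) (F : Fin m → ℝ → ℝ) :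
    ∫ lam : Fin m → ℝ, ∏ i ∈ s, F i (lam i) ∂(Measure.pi fun _ => μ)
      = ∏ i ∈ s, ∫ x, F i x ∂μ := by
  have h : (fun lam : Fin m → ℝ => ∏ i ∈ s, F i (lam i))
      = fun lam => ∏ i, (fun j x => if j ∈ s then F j x else 1) i (lam i) := by
    funext lam; exact prod_ite_univ s _
  rw [h, prod_integral (μ := μ) (fun j x => if j ∈ s then F j x else 1)]
  rw [prod_ite_univ s (fun i => ∫ x, F i x ∂μ)]
  refine Finset.prod_congr rfl fun i _ => ?_
  by_cases hi : i ∈ s <;> simp [hi]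

lemma integral_comp_perm [IsProbabilityMeasure μ] (π : Equiv.Perm (Fin m))
    (F : (Fin m → ℝ) → ℝ) :
    ∫ lam : Fin m → ℝ, F (fun i => lam (π i)) ∂(Measure.pi fun _ => μ)
      = ∫ lam : Fin m → ℝ, F lam ∂(Measure.pi fun _ => μ) := by
  have h := (measurePreserving_piCongrLeft (fun _ : Fin m => μ) π.symm).integral_comp' F
  rw [← h]
  congr 1
  funext lam
  congr 1
  funext i
  rw [MeasurableEquiv.coe_piCongrLeft]
  simp [Equiv.piCongrLeft_apply_eq_cast]

lemma eval_monomial_prod (α : Fin m →₀ ℕ) (c : ℝ) (lam : Fin m → ℝ) :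
    eval lam (monomial α c) = c * ∏ i, lam i ^ α i := by
  rw [eval_monomial]
  congr 1
  exact Finsupp.prod_pow α lam

lemma intg_mv [IsProbabilityMeasure μ] (hmom : ∀ k : ℕ, Integrable (fun x => x ^ k) μ)
    (p : MvPolynomial (Fin m) ℝ) :
    Integrable (fun lam => eval lam p) (Measure.pi fun _ => μ) := by
  induction p using MvPolynomial.induction_on' with
  | monomial α c =>
      have h : (fun lam : Fin m → ℝ => eval lam (monomial α c))
          = fun lam => c * ∏ i, (fun j (x : ℝ) => x ^ α j) i (lam i) := by
        funext lam; exact eval_monomial_prod α c lam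
      rw [h]
      exact (intg_prod _ fun i => hmom (α i)).const_mul c
  | add p q hp hq =>
      simp only [eval_add]; exact hp.add hq

lemma integral_monomial [IsProbabilityMeasure μ] (α : Fin m →₀ ℕ) (c : ℝ) :
    ∫ lam : Fin m → ℝ, eval lam (monomial α c) ∂(Measure.pi fun _ => μ)
      = c * ∏ i, Mo μ (α i) := by
  have h : (fun lam : Fin m → ℝ => eval lam (monomial α c))
      = fun lam => c * ∏ i, (fun j (x : ℝ) => x ^ α j) i (lam i) := by
    funext lam; exact eval_monomial_prod α c lam
  rw [h, integral_const_mul, prod_integral (μ := μ) (fun j (x : ℝ) => x ^ α j)]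
  rfl

lemma integral_mv [IsProbabilityMeasure μ] (hmom : ∀ k : ℕ, Integrable (fun x => x ^ k) μ)
    (p : MvPolynomial (Fin m) ℝ) :
    ∫ lam : Fin m → ℝ, eval lam p ∂(Measure.pi fun _ => μ)
      = ∑ α ∈ p.support, p.coeff α * ∏ i, Mo μ (α i) := by
  conv_lhs => rw [p.as_sum]
  have h : (fun lam : Fin m → ℝ => eval lam (∑ α ∈ p.support, monomial α (p.coeff α)))
      = fun lam => ∑ α ∈ p.support, eval lam (monomial α (p.coeff α)) := by
    funext lam; rw [map_sum]
  rw [h, integral_finset_sum _ fun α _ => intg_mv hmom _]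
  exact Finset.sum_congr rfl fun α _ => integral_monomial α _

/-- integrate out all coordinates except `l` -/
noncomputable def gOf (μ : Measure ℝ) {m : ℕ} (l : Fin m) (p : MvPolynomial (Fin m) ℝ) :
    Polynomial ℝ :=
  ∑ α ∈ p.support, Polynomial.C (p.coeff α * ∏ i ∈ Finset.univ.erase l, Mo μ (α i))
      * Polynomial.X ^ (α l)

lemma gOf_eval (l : Fin m) (p : MvPolynomial (Fin m) ℝ) (t : ℝ) :
    (gOf μ l p).eval t
      = ∑ α ∈ p.support, p.coeff α * (∏ i ∈ Finset.univ.erase l, Mo μ (α i)) * t ^ (α l) := by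
  simp only [gOf, Polynomial.eval_finset_sum, Polynomial.eval_mul, Polynomial.eval_C,
    Polynomial.eval_pow, Polynomial.eval_X]

lemma gOf_natDegree_le {d : ℕ} (l : Fin m) (p : MvPolynomial (Fin m) ℝ)
    (hdeg : p.totalDegree ≤ d) : (gOf μ l p).natDegree ≤ d := by
  refine Polynomial.natDegree_sum_le_of_forall_le _ _ fun α hα => ?_
  refine le_trans (Polynomial.natDegree_C_mul_le _ _) ?_
  refine le_trans (Polynomial.natDegree_X_pow_le _) ?_
  refine le_trans ?_ (le_trans (MvPolynomial.le_totalDegree hα) hdeg)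
  -- α l ≤ α.sum fun _ n => n
  by_cases h : α l = 0
  · simp [h]
  · have hl : l ∈ α.support := Finsupp.mem_support_iff.mpr h
    exact Finset.single_le_sum (fun i _ => Nat.zero_le _) hl

/-- the core pairing identity -/
lemma gOf_core [IsProbabilityMeasure μ] (hmom : ∀ k : ℕ, Integrable (fun x => x ^ k) μ)
    (l : Fin m) (p : MvPolynomial (Fin m) ℝ) (j : ℕ) :
    ∫ x, (gOf μ l p).eval x * x ^ j ∂μ
      = ∫ lam : Fin m → ℝ, eval lam p * (lam l) ^ j ∂(Measure.pi fun _ => μ) := by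
  have hL : (fun x : ℝ => (gOf μ l p).eval x * x ^ j)
      = fun x => ∑ α ∈ p.support,
          p.coeff α * (∏ i ∈ Finset.univ.erase l, Mo μ (α i)) * x ^ (α l + j) := by
    funext x
    rw [gOf_eval, Finset.sum_mul]
    exact Finset.sum_congr rfl fun α _ => by ring
  have hR : (fun lam : Fin m → ℝ => eval lam p * (lam l) ^ j)
      = fun lam => ∑ α ∈ p.support, p.coeff α *
          ∏ i, (fun k (x : ℝ) => x ^ (α k + if k = l then j else 0)) i (lam i) := by
    funext lam
    conv_lhs => rw [p.as_sum, map_sum, Finset.sum_mul]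
    refine Finset.sum_congr rfl fun α _ => ?_
    rw [eval_monomial_prod, mul_assoc]
    congr 1
    have key : ∀ i : Fin m,
        lam i ^ (α i + if i = l then j else 0) = lam i ^ α i * (if i = l then lam i ^ j else 1) := by
      intro i; by_cases hi : i = l <;> simp [hi, pow_add]
    rw [Finset.prod_congr rfl (fun i _ => key i), Finset.prod_mul_distrib,
      Finset.prod_ite_eq' Finset.univ l (fun i => lam i ^ j)]
    simp
  rw [hL, hR]
  rw [integral_finset_sum _ (fun α _ => ((hmom (α l + j)).const_mul _))]
  rw [integral_finset_sum _ (fun α _ => ((intg_prod (μ := μ) _ fun i => hmom _).const_mul _))]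
  refine Finset.sum_congr rfl fun α _ => ?_
  have hpi := prod_integral (μ := μ) (fun k (x : ℝ) => x ^ (α k + if k = l then j else 0))
  beta_reduce at hpi
  rw [integral_const_mul, integral_const_mul, hpi]
  have hsplit : ∏ i : Fin m, (∫ x : ℝ, x ^ (α i + if i = l then j else 0) ∂μ)
      = Mo μ (α l + j) * ∏ i ∈ Finset.univ.erase l, Mo μ (α i) := by
    rw [← Finset.mul_prod_erase Finset.univ _ (Finset.mem_univ l)]
    congr 1
    · simp [Mo]
    · refine Finset.prod_congr rfl fun i hi => ?_
      have : i ≠ l := Finset.ne_of_mem_erase hi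
      simp [this, Mo]
  rw [hsplit, Mo]
  ring

lemma intg_poly (hmom : ∀ k : ℕ, Integrable (fun x => x ^ k) μ) (q : Polynomial ℝ) :
    Integrable (fun x => q.eval x) μ := by
  have h : (fun x => q.eval x)
      = fun x => ∑ k ∈ Finset.range (q.natDegree + 1), q.coeff k * x ^ k := by
    funext x; exact q.eval_eq_sum_range x
  rw [h]
  exact integrable_finset_sum _ fun k _ => (hmom k).const_mul _

lemma intg_poly_mul_pow [IsProbabilityMeasure μ] (hmom : ∀ k : ℕ, Integrable (fun x => x ^ k) μ)
    (q : Polynomial ℝ) (k : ℕ) : Integrable (fun x => q.eval x * x ^ k) μ := by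
  have h : (fun x : ℝ => q.eval x * x ^ k) = fun x => (q * Polynomial.X ^ k).eval x := by
    funext x; simp
  rw [h]; exact intg_poly hmom _

lemma intg_mv_mul_pow [IsProbabilityMeasure μ] (hmom : ∀ k : ℕ, Integrable (fun x => x ^ k) μ)
    (p : MvPolynomial (Fin m) ℝ) (l : Fin m) (k : ℕ) :
    Integrable (fun lam => eval lam p * (lam l) ^ k) (Measure.pi fun _ => μ) := by
  have h : (fun lam : Fin m → ℝ => eval lam p * (lam l) ^ k)
      = fun lam => eval lam (p * (X l) ^ k) := by
    funext lam; simp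
  rw [h]; exact intg_mv hmom _

lemma gOf_pairing [IsProbabilityMeasure μ] (hmom : ∀ k : ℕ, Integrable (fun x => x ^ k) μ)
    (l : Fin m) (p : MvPolynomial (Fin m) ℝ) (q : Polynomial ℝ) :
    ∫ x, (gOf μ l p).eval x * q.eval x ∂μ
      = ∫ lam : Fin m → ℝ, eval lam p * q.eval (lam l) ∂(Measure.pi fun _ => μ) := by
  have hL : (fun x : ℝ => (gOf μ l p).eval x * q.eval x)
      = fun x => ∑ k ∈ Finset.range (q.natDegree + 1),
          q.coeff k * ((gOf μ l p).eval x * x ^ k) := by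
    funext x
    rw [q.eval_eq_sum_range x, Finset.mul_sum]
    exact Finset.sum_congr rfl fun k _ => by ring
  have hR : (fun lam : Fin m → ℝ => eval lam p * q.eval (lam l))
      = fun lam => ∑ k ∈ Finset.range (q.natDegree + 1),
          q.coeff k * (eval lam p * (lam l) ^ k) := by
    funext lam
    rw [q.eval_eq_sum_range (lam l), Finset.mul_sum]
    exact Finset.sum_congr rfl fun k _ => by ring
  rw [hL, hR]
  rw [integral_finset_sum _ fun k _ => (intg_poly_mul_pow hmom _ k).const_mul _]
  rw [integral_finset_sum _ fun k _ => (intg_mv_mul_pow hmom p l k).const_mul _]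
  refine Finset.sum_congr rfl fun k _ => ?_
  rw [integral_const_mul, integral_const_mul, gOf_core hmom l p k]

lemma sym_move [IsProbabilityMeasure μ] {f : MvPolynomial (Fin m) ℝ}
    (hsym : ∀ π : Equiv.Perm (Fin m), rename π f = f) (h : ℝ → ℝ) (i l : Fin m) :
    ∫ lam : Fin m → ℝ, eval lam f * h (lam i) ∂(Measure.pi fun _ => μ)
      = ∫ lam : Fin m → ℝ, eval lam f * h (lam l) ∂(Measure.pi fun _ => μ) := by
  rw [← integral_comp_perm (μ := μ) (Equiv.swap i l)
    (fun lam' => eval lam' f * h (lam' i))]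
  congr 1
  funext lam
  have h1 : (fun k => lam (Equiv.swap i l k)) = lam ∘ (Equiv.swap i l) := rfl
  simp only [h1]
  rw [← MvPolynomial.eval_rename, hsym]
  simp [Equiv.swap_apply_left]

lemma eval_aeval_X (g : Polynomial ℝ) (i : Fin m) (lam : Fin m → ℝ) :
    eval lam (Polynomial.aeval (X i : MvPolynomial (Fin m) ℝ) g) = g.eval (lam i) := by
  induction g using Polynomial.induction_on' with
  | monomial n a => simp [Polynomial.aeval_monomial, mul_comm]
  | add p q hp hq => simp [hp, hq]

lemma integral_coord_single [IsProbabilityMeasure μ] (h : ℝ → ℝ)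
    (i : Fin m) :
    ∫ lam : Fin m → ℝ, h (lam i) ∂(Measure.pi fun _ => μ) = ∫ x, h x ∂μ := by
  have h1 : (fun lam : Fin m → ℝ => h (lam i))
      = fun lam => ∏ k ∈ ({i} : Finset (Fin m)), (fun _ x => h x) k (lam k) := by
    funext lam; simp
  rw [h1, prod_integral_s (μ := μ) ({i} : Finset (Fin m)) (fun _ x => h x)]
  simp

lemma integral_coord_pair [IsProbabilityMeasure μ] (h : ℝ → ℝ) (i j : Fin m) (hij : i ≠ j) :
    ∫ lam : Fin m → ℝ, h (lam i) * h (lam j) ∂(Measure.pi fun _ => μ)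
      = (∫ x, h x ∂μ) * (∫ x, h x ∂μ) := by
  have h1 : (fun lam : Fin m → ℝ => h (lam i) * h (lam j))
      = fun lam => ∏ k ∈ ({i, j} : Finset (Fin m)), (fun _ x => h x) k (lam k) := by
    funext lam; rw [Finset.prod_pair hij]
  rw [h1, prod_integral_s (μ := μ) ({i, j} : Finset (Fin m)) (fun _ x => h x),
    Finset.prod_pair hij]

end Stmt10Aux

open Stmt10Aux

/-- Reduction to sums of a univariate polynomial: for any symmetric degree-d polynomial f
with E_{μ^m}[f] = 0 there is a univariate g of degree ≤ d with E_μ[g]=0, no larger second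
moment under μ^m, and the same mean under ν_P = μ^{m-1} × δ_{λ*} (realized by fixing the
last coordinate to λ*). -/
theorem stmt10 (m d : ℕ) (hm : 1 ≤ m) (μ : MeasureTheory.Measure ℝ)
    [MeasureTheory.IsProbabilityMeasure μ]
    (hmom : ∀ k : ℕ, MeasureTheory.Integrable (fun x => x ^ k) μ)
    (lamstar : ℝ)
    (f : MvPolynomial (Fin m) ℝ) (hdeg : f.totalDegree ≤ d)
    (hsym : ∀ π : Equiv.Perm (Fin m), MvPolynomial.rename π f = f)
    (hmean : ∫ lam : Fin m → ℝ, MvPolynomial.eval lam f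
        ∂(MeasureTheory.Measure.pi fun _ => μ) = 0) :
    ∃ g : Polynomial ℝ, g.natDegree ≤ d ∧ (∫ x, g.eval x ∂μ = 0) ∧
      (∫ lam : Fin m → ℝ, (∑ i, g.eval (lam i)) ^ 2 ∂(MeasureTheory.Measure.pi fun _ => μ))
        ≤ (∫ lam : Fin m → ℝ, (MvPolynomial.eval lam f) ^ 2
            ∂(MeasureTheory.Measure.pi fun _ => μ)) ∧
      (∫ lam : Fin m → ℝ,
          (∑ i, g.eval ((Function.update lam ⟨m - 1, Nat.sub_lt hm Nat.one_pos⟩ lamstar) i))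
          ∂(MeasureTheory.Measure.pi fun _ => μ))
        = ∫ lam : Fin m → ℝ,
            MvPolynomial.eval (Function.update lam ⟨m - 1, Nat.sub_lt hm Nat.one_pos⟩ lamstar) f
            ∂(MeasureTheory.Measure.pi fun _ => μ) := by
  set l : Fin m := ⟨m - 1, Nat.sub_lt hm Nat.one_pos⟩ with hl
  set g : Polynomial ℝ := gOf μ l f with hg
  have hJg : ∫ x, g.eval x ∂μ = 0 := by
    have hp := gOf_pairing (μ := μ) hmom l f 1
    simp only [Polynomial.eval_one, mul_one] at hp
    exact hp.trans hmean
  set G2 : ℝ := ∫ x, g.eval x * g.eval x ∂μ with hG2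
  refine ⟨g, gOf_natDegree_le l f hdeg, hJg, ?_, ?_⟩
  -- second moment
  · set Pg : MvPolynomial (Fin m) ℝ := ∑ i, Polynomial.aeval (X i) g with hPg
    have pgeval : ∀ lam : Fin m → ℝ, eval lam Pg = ∑ i, g.eval (lam i) := by
      intro lam
      rw [hPg, map_sum]
      exact Finset.sum_congr rfl fun i _ => eval_aeval_X g i lam
    have hij : ∀ i j : Fin m,
        ∫ lam : Fin m → ℝ, g.eval (lam i) * g.eval (lam j) ∂(Measure.pi fun _ => μ)
          = if i = j then G2 else 0 := by
      intro i j
      by_cases h : i = j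
      · subst h
        rw [if_pos rfl]
        exact integral_coord_single (μ := μ) (fun x => g.eval x * g.eval x) i
      · rw [if_neg h, integral_coord_pair (μ := μ) g.eval i j h, hJg, mul_zero]
    have hcross : ∀ i : Fin m,
        ∫ lam : Fin m → ℝ, eval lam f * g.eval (lam i) ∂(Measure.pi fun _ => μ) = G2 :=
      fun i => (sym_move (μ := μ) hsym g.eval i l).trans (gOf_pairing hmom l f g).symm
    have intpair : ∀ i j : Fin m,
        Integrable (fun lam : Fin m → ℝ => g.eval (lam i) * g.eval (lam j))
          (Measure.pi fun _ => μ) := by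
      intro i j
      have h1 : (fun lam : Fin m → ℝ => g.eval (lam i) * g.eval (lam j))
          = fun lam => eval lam ((Polynomial.aeval (X i) g) * (Polynomial.aeval (X j) g)) := by
        funext lam; rw [map_mul, eval_aeval_X, eval_aeval_X]
      rw [h1]; exact intg_mv hmom _
    have intfg : ∀ i : Fin m,
        Integrable (fun lam : Fin m → ℝ => eval lam f * g.eval (lam i))
          (Measure.pi fun _ => μ) := by
      intro i
      have h1 : (fun lam : Fin m → ℝ => eval lam f * g.eval (lam i))
          = fun lam => eval lam (f * Polynomial.aeval (X i) g) := by
        funext lam; rw [map_mul, eval_aeval_X]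
      rw [h1]; exact intg_mv hmom _
    have int1 : Integrable (fun lam : Fin m → ℝ => (eval lam f) ^ 2)
        (Measure.pi fun _ => μ) := by
      have h1 : (fun lam : Fin m → ℝ => (eval lam f) ^ 2) = fun lam => eval lam (f ^ 2) := by
        funext lam; rw [map_pow]
      rw [h1]; exact intg_mv hmom _
    have int2 : Integrable (fun lam : Fin m → ℝ => eval lam f * eval lam Pg)
        (Measure.pi fun _ => μ) := by
      have h1 : (fun lam : Fin m → ℝ => eval lam f * eval lam Pg)
          = fun lam => ∑ i, eval lam f * g.eval (lam i) := by
        funext lam; rw [pgeval, Finset.mul_sum]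
      rw [h1]; exact integrable_finset_sum _ fun i _ => intfg i
    have int3 : Integrable (fun lam : Fin m → ℝ => (eval lam Pg) ^ 2)
        (Measure.pi fun _ => μ) := by
      have h1 : (fun lam : Fin m → ℝ => (eval lam Pg) ^ 2)
          = fun lam => ∑ i, ∑ j, g.eval (lam i) * g.eval (lam j) := by
        funext lam; rw [pgeval, sq, Finset.sum_mul_sum]
      rw [h1]
      exact integrable_finset_sum _ fun i _ => integrable_finset_sum _ fun j _ => intpair i j
    have hB : ∫ lam : Fin m → ℝ, eval lam f * eval lam Pg ∂(Measure.pi fun _ => μ)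
        = m * G2 := by
      have h1 : (fun lam : Fin m → ℝ => eval lam f * eval lam Pg)
          = fun lam => ∑ i, eval lam f * g.eval (lam i) := by
        funext lam; rw [pgeval, Finset.mul_sum]
      rw [h1, integral_finset_sum _ fun i _ => intfg i,
        Finset.sum_congr rfl fun i _ => hcross i]
      simp [mul_comm]
    have hC : ∫ lam : Fin m → ℝ, (eval lam Pg) ^ 2 ∂(Measure.pi fun _ => μ) = m * G2 := by
      have h1 : (fun lam : Fin m → ℝ => (eval lam Pg) ^ 2)
          = fun lam => ∑ i, ∑ j, g.eval (lam i) * g.eval (lam j) := by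
        funext lam; rw [pgeval, sq, Finset.sum_mul_sum]
      rw [h1, integral_finset_sum _ fun i _ => integrable_finset_sum _ fun j _ => intpair i j]
      have h2 : ∀ i : Fin m,
          (∫ lam : Fin m → ℝ, ∑ j, g.eval (lam i) * g.eval (lam j)
              ∂(Measure.pi fun _ => μ)) = G2 := by
        intro i
        rw [integral_finset_sum _ fun j _ => intpair i j,
          Finset.sum_congr rfl fun j _ => hij i j]
        simp
      rw [Finset.sum_congr rfl fun i _ => h2 i]
      simp [mul_comm]
    have key : (0 : ℝ) ≤ ∫ lam : Fin m → ℝ, (eval lam f - eval lam Pg) ^ 2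
        ∂(Measure.pi fun _ => μ) := integral_nonneg fun lam => sq_nonneg _
    have hexp : ∫ lam : Fin m → ℝ, (eval lam f - eval lam Pg) ^ 2 ∂(Measure.pi fun _ => μ)
        = (∫ lam : Fin m → ℝ, (eval lam f) ^ 2 ∂(Measure.pi fun _ => μ))
          - 2 * (∫ lam : Fin m → ℝ, eval lam f * eval lam Pg ∂(Measure.pi fun _ => μ))
          + ∫ lam : Fin m → ℝ, (eval lam Pg) ^ 2 ∂(Measure.pi fun _ => μ) := by
      have h1 : (fun lam : Fin m → ℝ => (eval lam f - eval lam Pg) ^ 2)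
          = fun lam => ((eval lam f) ^ 2 - 2 * (eval lam f * eval lam Pg))
              + (eval lam Pg) ^ 2 := by
        funext lam; ring
      have int2' : Integrable (fun lam : Fin m → ℝ => 2 * (eval lam f * eval lam Pg))
          (Measure.pi fun _ => μ) := by exact int2.const_mul 2
      have int12 : Integrable (fun lam : Fin m → ℝ =>
          (eval lam f) ^ 2 - 2 * (eval lam f * eval lam Pg)) (Measure.pi fun _ => μ) := by
        exact int1.sub int2'
      rw [h1, integral_add int12 int3, integral_sub int1 int2', integral_const_mul]
    have hfin : (m : ℝ) * G2 ≤ ∫ lam : Fin m → ℝ, (eval lam f) ^ 2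
        ∂(Measure.pi fun _ => μ) := by
      rw [hexp, hB, hC] at key
      linarith
    have h1 : (fun lam : Fin m → ℝ => (∑ i, g.eval (lam i)) ^ 2)
        = fun lam => (eval lam Pg) ^ 2 := by
      funext lam; rw [pgeval]
    rw [h1, hC]
    exact hfin
  -- nu_P mean
  · have hupd : ∀ (lam : Fin m → ℝ) (i : Fin m),
        Function.update lam l lamstar i = if i = l then lamstar else lam i :=
      fun lam i => Function.update_apply lam l lamstar i
    have intco : ∀ i : Fin m, Integrable (fun lam : Fin m → ℝ => g.eval (lam i))
        (Measure.pi fun _ => μ) := by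
      intro i
      have h1 : (fun lam : Fin m → ℝ => g.eval (lam i))
          = fun lam => eval lam (Polynomial.aeval (X i) g) := by
        funext lam; rw [eval_aeval_X]
      rw [h1]; exact intg_mv hmom _
    have hLpt : (fun lam : Fin m → ℝ => ∑ i, g.eval (Function.update lam l lamstar i))
        = fun lam => g.eval lamstar + ∑ i ∈ Finset.univ.erase l, g.eval (lam i) := by
      funext lam
      rw [← Finset.add_sum_erase Finset.univ _ (Finset.mem_univ l)]
      congr 1
      · rw [hupd]; simp
      · exact Finset.sum_congr rfl fun i hi => by
          rw [hupd]; simp [Finset.ne_of_mem_erase hi]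
    have hLHS : (∫ lam : Fin m → ℝ,
        (∑ i, g.eval (Function.update lam l lamstar i)) ∂(Measure.pi fun _ => μ))
        = g.eval lamstar := by
      rw [hLpt, integral_add (integrable_const _)
        (integrable_finset_sum _ fun i _ => intco i), integral_const,
        integral_finset_sum _ fun i _ => intco i]
      have hz : ∀ i ∈ Finset.univ.erase l,
          (∫ lam : Fin m → ℝ, g.eval (lam i) ∂(Measure.pi fun _ => μ)) = 0 := by
        intro i _
        rw [integral_coord_single (μ := μ) g.eval i, hJg]
      rw [Finset.sum_congr rfl hz]
      simp
    rw [hLHS]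
    have hRpt : (fun lam : Fin m → ℝ => eval (Function.update lam l lamstar) f)
        = fun lam => ∑ α ∈ f.support, (f.coeff α * lamstar ^ (α l)) *
            ∏ i ∈ Finset.univ.erase l, (fun j (x : ℝ) => x ^ (α j)) i (lam i) := by
      funext lam
      conv_lhs => rw [f.as_sum, map_sum]
      refine Finset.sum_congr rfl fun α _ => ?_
      rw [eval_monomial_prod, ← Finset.mul_prod_erase Finset.univ _ (Finset.mem_univ l)]
      have h1 : Function.update lam l lamstar l = lamstar := by
        rw [hupd]; simp
      have h2 : ∏ i ∈ Finset.univ.erase l, (Function.update lam l lamstar i) ^ (α i)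
          = ∏ i ∈ Finset.univ.erase l, (lam i) ^ (α i) :=
        Finset.prod_congr rfl fun i hi => by
          rw [hupd]; simp [Finset.ne_of_mem_erase hi]
      rw [h1, h2]; ring
    rw [hRpt, integral_finset_sum _ fun α _ =>
      (intg_prod_s (μ := μ) _ _ fun i => hmom (α i)).const_mul _]
    rw [gOf_eval]
    refine Finset.sum_congr rfl fun α _ => ?_
    rw [integral_const_mul, prod_integral_s (μ := μ) _ (fun j (x : ℝ) => x ^ (α j))]
    have h3 : ∀ i, (∫ x : ℝ, x ^ (α i) ∂μ) = Mo μ (α i) := fun i => rfl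
    rw [Finset.prod_congr rfl fun i _ => h3 i]
    ring
end
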